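/- The vector (4−√15, 1, 4−√15, 1, 4−√15, 1, 4−√15, 1, 4−√15, 1, 4−√15, 1) is an eigenvector of the 12×12 monotile inflation matrix M_mono with eigenvalue 4 + √15. -/

import Mathlib

/-- The 12×12 monotile inflation matrix M_mono. -/
def Mmono : Matrix (Fin 12) (Fin 12) ℝ :=
  Matrix.of
  ![![1, 0, 2, 0, 0, 0, -2, 1, -1, 0, 0, 0],
   ![0, 1, 5, 0, 3, 1, 0, 2, -4, 2, -5, 2],
   ![0, 0, 1, 0, 2, 0, 0, 0, -2, 1, -1, 0],
   ![-5, 2, 0, 1, 5, 0, 3, 1, 0, 2, -4, 2],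
   ![-1, 0, 0, 0, 1, 0, 2, 0, 0, 0, -2, 1],
   ![-4, 2, -5, 2, 0, 1, 5, 0, 3, 1, 0, 2],
   ![-2, 1, -1, 0, 0, 0, 1, 0, 2, 0, 0, 0],
   ![0, 2, -4, 2, -5, 2, 0, 1, 5, 0, 3, 1],
   ![0, 0, -2, 1, -1, 0, 0, 0, 1, 0, 2, 0],
   ![3, 1, 0, 2, -4, 2, -5, 2, 0, 1, 5, 0],
   ![2, 0, 0, 0, -2, 1, -1, 0, 0, 0, 1, 0],
   ![5, 0, 3, 1, 0, 2, -4, 2, -5, 2, 0, 1]]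
/-- The vector alternating (4−√15, 1, 4−√15, 1, …) is an eigenvector of M_mono
with eigenvalue 4+√15. -/
theorem eigenvector_Mmono :
    (fun i : Fin 12 => if (i : ℕ) % 2 = 0 then 4 - Real.sqrt 15 else 1) ≠ 0 ∧
    Mmono.mulVec (fun i : Fin 12 => if (i : ℕ) % 2 = 0 then 4 - Real.sqrt 15 else 1) =
      (4 + Real.sqrt 15) •
        (fun i : Fin 12 => if (i : ℕ) % 2 = 0 then 4 - Real.sqrt 15 else 1) := by
  have h15 : Real.sqrt 15 ^ 2 = 15 := Real.sq_sqrt (by norm_num)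
  set s := Real.sqrt 15 with hs
  have hv : (fun i : Fin 12 => if (i : ℕ) % 2 = 0 then 4 - s else 1) =
      ![4 - s, 1, 4 - s, 1, 4 - s, 1, 4 - s, 1, 4 - s, 1, 4 - s, 1] := by
    funext i; fin_cases i <;> rfl
  rw [hv]
  constructor
  · intro h
    have h1 := congrFun h 1
    simp at h1
  · simp only [Mmono, Matrix.cons_mulVec, Matrix.cons_dotProduct,
      Matrix.dotProduct_of_isEmpty, Matrix.head_cons, Matrix.tail_cons,
      Matrix.smul_cons, Matrix.smul_empty, smul_eq_mul, add_zero]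
    refine congrArg₂ _ ?_ (congrArg₂ _ ?_ (congrArg₂ _ ?_ (congrArg₂ _ ?_ (congrArg₂ _ ?_
      (congrArg₂ _ ?_ (congrArg₂ _ ?_ (congrArg₂ _ ?_ (congrArg₂ _ ?_ (congrArg₂ _ ?_
      (congrArg₂ _ ?_ (congrArg₂ _ ?_ ?_))))))))))) <;>
      first
        | (funext i; exact i.elim0)
        | nlinarith [h15]
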